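/- (Multi-frequency Calderón–Zygmund estimate) Let 0 < ε < 1/2, let I be a dyadic interval, and let 𝔭 be a collection of at most N pairwise disjoint tiles, each with time interval equal to I. For g ∈ L^{1/(1−ε)}([0,∞)), let a = Σ_{p∈𝔭} ⟨g, w_p⟩ w_p be the orthogonal projection of g onto the span of the wave packets {w_p : p ∈ 𝔭}. Then ‖a‖_{L^2}^2 = Σ_{p∈𝔭} |⟨g, w_p⟩|^2 ≤ N^{1−2ε} ‖g·1_I‖_{L^{1/(1−ε)}}^2 |I|^{2ε−1}. -/

import Mathlib

open MeasureTheory Set ENNReal NNReal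

noncomputable section

namespace Quartile

/-- The Walsh functions on `[0,1)` (extended by zero), in Walsh-Paley order,
defined by the recursion `W_{2l} = W_l(2x) + W_l(2x-1)`, `W_{2l+1} = W_l(2x) - W_l(2x-1)`. -/
def walsh (n : ℕ) (x : ℝ) : ℝ :=
  if h : n = 0 then (if 0 ≤ x ∧ x < 1 then 1 else 0)
  else if n % 2 = 0 then walsh (n / 2) (2 * x) + walsh (n / 2) (2 * x - 1)
  else walsh (n / 2) (2 * x) - walsh (n / 2) (2 * x - 1)
termination_by n
decreasing_by
  all_goals exact Nat.div_lt_self (Nat.pos_of_ne_zero h) one_lt_two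

/-- The dyadic interval `[2^k n, 2^k (n+1)) ⊆ [0,∞)`. -/
def dyadicI (k : ℤ) (n : ℕ) : Set ℝ := Ico ((2:ℝ)^k * n) ((2:ℝ)^k * (n+1))

/-- A tile: the dyadic rectangle `[2^k n, 2^k(n+1)) × [2^{-k} l, 2^{-k}(l+1))` of area one. -/
structure Tile where
  k : ℤ
  n : ℕ
  l : ℕ

namespace Tile

/-- The time interval `I_p` of a tile. -/
def timeI (p : Tile) : Set ℝ := Ico ((2:ℝ)^p.k * p.n) ((2:ℝ)^p.k * (p.n+1))

/-- The frequency interval `ω_p` of a tile. -/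
def freqI (p : Tile) : Set ℝ := Ico ((2:ℝ)^(-p.k) * p.l) ((2:ℝ)^(-p.k) * (p.l+1))

/-- The tile as a subset of the phase plane. -/
def toSet (p : Tile) : Set (ℝ × ℝ) := p.timeI ×ˢ p.freqI

/-- The Walsh wave packet `w_p` of a tile, `L²`-normalized. -/
def wp (p : Tile) (x : ℝ) : ℝ :=
  Real.sqrt ((2:ℝ)^(-p.k)) * walsh p.l ((2:ℝ)^(-p.k) * x - p.n)

end Tile

/-- The order on dyadic rectangles: `p ≤ q` iff `I_p ⊆ I_q` and `ω_q ⊆ ω_p`, for tiles. -/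
def tileLE (p q : Tile) : Prop := p.timeI ⊆ q.timeI ∧ q.freqI ⊆ p.freqI

/-- The inner product `⟨f, w_p⟩` of a function with a (real valued) wave packet. -/
def coef (f : ℝ → ℂ) (p : Tile) : ℂ := ∫ x, f x * (p.wp x : ℂ)

/-- The rank one projection `Π_p f = ⟨f, w_p⟩ w_p` associated to a single tile. -/
def projT (p : Tile) (f : ℝ → ℂ) (x : ℝ) : ℂ := coef f p * (p.wp x : ℂ)

/-- The projection associated to a collection of (pairwise disjoint) tiles. -/
def projSet (𝔭 : Set Tile) (f : ℝ → ℂ) (x : ℝ) : ℂ := ∑' p : 𝔭, projT p f x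

/-- The maximal tiles contained in a subset `S` of the phase plane; when `S` is a disjoint
union of tiles (of the kind appearing below) these form the canonical tiling of `S`. -/
def maxTiles (S : Set (ℝ × ℝ)) : Set Tile :=
  {p | p.toSet ⊆ S ∧ ∀ q : Tile, q.toSet ⊆ S → tileLE p q → q = p}

/-- The phase plane projection `Π_S` associated to a subset `S` of the phase plane,
computed with the canonical tiling of `S` by maximal tiles (the projection is independent
of the chosen tiling). -/
def piProj (S : Set (ℝ × ℝ)) (f : ℝ → ℂ) (x : ℝ) : ℂ := projSet (maxTiles S) f x

/-- A bitile: the dyadic rectangle `[2^k n, 2^k(n+1)) × [2^{1-k} l, 2^{1-k}(l+1))` of area two. -/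
structure Bitile where
  k : ℤ
  n : ℕ
  l : ℕ

namespace Bitile

/-- The time interval `I_P` of a bitile. -/
def timeI (P : Bitile) : Set ℝ := Ico ((2:ℝ)^P.k * P.n) ((2:ℝ)^P.k * (P.n+1))

/-- The frequency interval `ω_P` of a bitile. -/
def freqI (P : Bitile) : Set ℝ := Ico ((2:ℝ)^(1-P.k) * P.l) ((2:ℝ)^(1-P.k) * (P.l+1))

/-- The bitile as a subset of the phase plane. -/
def toSet (P : Bitile) : Set (ℝ × ℝ) := P.timeI ×ˢ P.freqI

/-- The lower tile `P_d` of a bitile. -/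
def d (P : Bitile) : Tile := ⟨P.k, P.n, 2*P.l⟩

/-- The upper tile `P_u` of a bitile. -/
def u (P : Bitile) : Tile := ⟨P.k, P.n, 2*P.l+1⟩

/-- The left tile of a bitile. -/
def left (P : Bitile) : Tile := ⟨P.k-1, 2*P.n, P.l⟩

/-- The right tile of a bitile. -/
def right (P : Bitile) : Tile := ⟨P.k-1, 2*P.n+1, P.l⟩

/-- The `L^∞`-normalized wave packet `φ_{P_d} = |I_P|^{1/2} w_{P_d}`. -/
def phid (P : Bitile) (x : ℝ) : ℝ := Real.sqrt ((2:ℝ)^P.k) * P.d.wp x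

end Bitile

/-- The order on dyadic rectangles, for bitiles. -/
def bitileLE (P Q : Bitile) : Prop := P.timeI ⊆ Q.timeI ∧ Q.freqI ⊆ P.freqI

/-- Strict order on bitiles. -/
def bitileLT (P Q : Bitile) : Prop := bitileLE P Q ∧ P ≠ Q

/-- A collection of bitiles is convex if together with `P₁ < P < P₂` for `P₁, P₂` in the
collection it contains `P`. -/
def IsConvex (PP : Set Bitile) : Prop :=
  ∀ P1 P2 P : Bitile, P1 ∈ PP → P2 ∈ PP → bitileLT P1 P → bitileLT P P2 → P ∈ PP

/-- A tree: a collection of bitiles with a (unique) maximal element `P_T = I_T × ω_T`. -/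
structure Tree where
  carrier : Set Bitile
  top : Bitile
  top_mem : top ∈ carrier
  le_top : ∀ P ∈ carrier, bitileLE P top

namespace Tree

/-- `T_d`: those bitiles of the tree whose lower tile frequency interval contains `ω_T`
(in the paper's notation, `P_T ≤ P_d`). -/
def Td (T : Tree) : Set Bitile := {P | P ∈ T.carrier ∧ T.top.freqI ⊆ P.d.freqI}

/-- `T_u`: those bitiles of the tree whose upper tile frequency interval contains `ω_T`
(in the paper's notation, `P_T ≤ P_u`). -/
def Tu (T : Tree) : Set Bitile := {P | P ∈ T.carrier ∧ T.top.freqI ⊆ P.u.freqI}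

/-- The region `⋃_{P ∈ T} P` of the phase plane occupied by a tree. -/
def unionSet (T : Tree) : Set (ℝ × ℝ) := ⋃ P ∈ T.carrier, P.toSet

/-- The phase plane projection `Π_T` of a (convex) tree. -/
def proj (T : Tree) (f : ℝ → ℂ) : ℝ → ℂ := piProj T.unionSet f

end Tree

/-- The vertical dilation `2^L S` of a subset of the phase plane. -/
def dilate (L : ℕ) (S : Set (ℝ × ℝ)) : Set (ℝ × ℝ) := (fun q => (q.1, (2:ℝ)^L * q.2)) '' S

/-- The enlarged tree `T^{(L)}` with respect to a frequency `ξ ∈ ω_T`: all bitiles `P` with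
`2^L ξ ∈ ω_P` contained in a rectangle `2^L P'` with `P' ∈ T`. -/
def Tree.enlarged (L : ℕ) (T : Tree) (ξ : ℝ) : Set Bitile :=
  {P | (2:ℝ)^L * ξ ∈ P.freqI ∧ ∃ P' ∈ T.carrier, P.toSet ⊆ dilate L P'.toSet}

/-- The region of the phase plane occupied by the enlarged tree `T^{(L)}`. -/
def Tree.enlargedSet (L : ℕ) (T : Tree) (ξ : ℝ) : Set (ℝ × ℝ) :=
  ⋃ P ∈ T.enlarged L ξ, P.toSet

/-- The left endpoint of `ω_T`, a canonical choice of `ξ ∈ ω_T`. -/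
def Tree.xiTop (T : Tree) : ℝ := (2:ℝ)^(1-T.top.k) * T.top.l

/-- The phase plane projection `Π_{T^{(L)}}` of the enlarged tree (independent of the
choice of `ξ ∈ ω_T`; we use the canonical choice).  For `L = 0` this is `Π_T`. -/
def Tree.projL (L : ℕ) (T : Tree) (f : ℝ → ℂ) : ℝ → ℂ := piProj (T.enlargedSet L T.xiTop) f

/-- `size^{(L)}(PP, f) = sup |I_T|^{-1/2} ‖Π_{T^{(L)}} f‖₂`, the supremum over convex trees
`T ⊆ PP`.  For `L = 0` this is the plain `size(PP, f)`. -/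
def size (L : ℕ) (PP : Set Bitile) (f : ℝ → ℂ) : ℝ≥0∞ :=
  ⨆ (T : Tree) (_ : T.carrier ⊆ PP ∧ IsConvex T.carrier),
    (ENNReal.ofReal (Real.sqrt ((2:ℝ)^T.top.k)))⁻¹ * eLpNorm (T.projL L f) 2 volume

/-- The quartile form `Λ_{PP}` restricted to a collection `PP` of bitiles. -/
def quartileFormOn (L : ℕ) (PP : Set Bitile) (f1 f2 f3 : ℝ → ℂ) : ℂ :=
  ∫ x, ∑' P : PP, (P.1.phid x : ℂ) * projT P.1.u f1 x *
      piProj (dilate L P.1.d.toSet) f2 x * piProj (dilate L P.1.d.toSet) f3 x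

/-- The bitiles contained in the strip `ℝ₊ × [0, 2^N)`. -/
def stripBitiles (N : ℕ) : Set Bitile := {P | P.freqI ⊆ Ico (0:ℝ) ((2:ℝ)^N)}

/-- The quartile form `Λ_L` (with frequency truncation parameter `N`). -/
def quartileForm (L N : ℕ) (f1 f2 f3 : ℝ → ℂ) : ℂ :=
  quartileFormOn L (stripBitiles N) f1 f2 f3

/-- The quartile form perturbed by a bounded sequence of coefficients `c_P`. -/
def quartileFormC (L N : ℕ) (c : Bitile → ℂ) (f1 f2 f3 : ℝ → ℂ) : ℂ :=
  ∫ x, ∑' P : stripBitiles N, c P.1 * (P.1.phid x : ℂ) * projT P.1.u f1 x *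
      piProj (dilate L P.1.d.toSet) f2 x * piProj (dilate L P.1.d.toSet) f3 x

/-- The counting function `Σ_{T ∈ 𝕋} 1_{I_T}` of a collection of trees. -/
def countingFn (𝕋 : Set Tree) (x : ℝ) : ℝ≥0∞ :=
  ∑' T : 𝕋, (T.1.top.timeI).indicator (fun _ => (1:ℝ≥0∞)) x

/-- The average of an `ℝ≥0∞`-valued function over a set. -/
def avgOn (I : Set ℝ) (g : ℝ → ℝ≥0∞) : ℝ≥0∞ := (volume I)⁻¹ * ∫⁻ x in I, g x

/-- The dyadic BMO norm on `[0,∞)` of an `ℝ≥0∞`-valued function. -/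
def dyadicBMO (g : ℝ → ℝ≥0∞) : ℝ≥0∞ :=
  ⨆ (k : ℤ) (n : ℕ), avgOn (dyadicI k n)
    (fun x => (g x - avgOn (dyadicI k n) g) + (avgOn (dyadicI k n) g - g x))

/-- The dyadic Hardy-Littlewood maximal function on `[0,∞)`. -/
def dyadicMax (f : ℝ → ℂ) (x : ℝ) : ℝ≥0∞ :=
  ⨆ (k : ℤ) (n : ℕ) (_ : x ∈ dyadicI k n),
    (volume (dyadicI k n))⁻¹ * ∫⁻ y in dyadicI k n, ‖f y‖₊

/-- The dyadic interval of length `2^j` containing `y ≥ 0`. -/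
def freqInterval (j : ℤ) (y : ℝ) : Set ℝ :=
  Ico ((2:ℝ)^j * ⌊y / (2:ℝ)^j⌋) ((2:ℝ)^j * (⌊y / (2:ℝ)^j⌋ + 1))

/-- The projection `Π_l := Π_{I_T × ω_l}`, where `ω_l` is the dyadic interval of
length `2^l` containing the frequency `y`. -/
def PiScale (T : Tree) (j : ℤ) (y : ℝ) (f : ℝ → ℂ) : ℝ → ℂ :=
  piProj (T.top.timeI ×ˢ freqInterval j y) f

/-- The difference projection `Π_l^Δ = Π_l - Π_{l-1}`. -/
def PiDelta (T : Tree) (j : ℤ) (y : ℝ) (f : ℝ → ℂ) (x : ℝ) : ℂ :=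
  PiScale T j y f x - PiScale T (j-1) y f x


section CZAux

lemma ofReal_norm_eq_coe_nnnorm {E : Type*} [SeminormedAddCommGroup E] (a : E) :
    ENNReal.ofReal ‖a‖ = (‖a‖₊ : ℝ≥0∞) := ofReal_norm a

lemma walsh_zero (x : ℝ) : walsh 0 x = if 0 ≤ x ∧ x < 1 then 1 else 0 := by
  rw [walsh.eq_def]; simp

lemma walsh_pos_eq {n : ℕ} (hn : n ≠ 0) (x : ℝ) :
    walsh n x = walsh (n/2) (2*x) + (if n % 2 = 0 then 1 else -1) * walsh (n/2) (2*x-1) := by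
  rw [walsh.eq_def]
  rcases Nat.mod_two_eq_zero_or_one n with h | h <;> simp [hn, h] <;> ring

lemma walsh_eq_zero : ∀ (n : ℕ) (x : ℝ), (x < 0 ∨ 1 ≤ x) → walsh n x = 0 := by
  intro n
  induction n using Nat.strong_induction_on with
  | _ n ih =>
    intro x hx
    rcases eq_or_ne n 0 with rfl | hn
    · rw [walsh_zero]
      rcases hx with h | h <;> simp [if_neg] <;> intro h1 <;> [linarith; linarith]
    · rw [walsh_pos_eq hn]
      have hlt := Nat.div_lt_self (Nat.pos_of_ne_zero hn) one_lt_two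
      have h1 : walsh (n/2) (2*x) = 0 := by
        apply ih _ hlt
        rcases hx with h | h
        · left; linarith
        · right; linarith
      have h2 : walsh (n/2) (2*x-1) = 0 := by
        apply ih _ hlt
        rcases hx with h | h
        · left; linarith
        · right; linarith
      rw [h1, h2]; ring

lemma walsh_abs_le : ∀ (n : ℕ) (x : ℝ), |walsh n x| ≤ 1 := by
  intro n
  induction n using Nat.strong_induction_on with
  | _ n ih =>
    intro x
    rcases eq_or_ne n 0 with rfl | hn
    · rw [walsh_zero]; split <;> simp
    · rw [walsh_pos_eq hn]
      have hlt := Nat.div_lt_self (Nat.pos_of_ne_zero hn) one_lt_two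
      rcases lt_or_ge x (1/2) with h | h
      · have h2 : walsh (n/2) (2*x-1) = 0 := walsh_eq_zero _ _ (Or.inl (by linarith))
        rw [h2, mul_zero, add_zero]; exact ih _ hlt _
      · have h1 : walsh (n/2) (2*x) = 0 := walsh_eq_zero _ _ (Or.inr (by linarith))
        rw [h1, zero_add, abs_mul]
        have : |if n % 2 = 0 then (1:ℝ) else -1| = 1 := by split <;> simp
        rw [this, one_mul]; exact ih _ hlt _

lemma walsh_measurable : ∀ n : ℕ, Measurable (walsh n) := by
  intro n
  induction n using Nat.strong_induction_on with
  | _ n ih =>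
    rcases eq_or_ne n 0 with rfl | hn
    · have : walsh 0 = (Ico (0:ℝ) 1).indicator (fun _ => (1:ℝ)) := by
        funext x; rw [walsh_zero, indicator_apply]; simp [mem_Ico]
      rw [this]; exact measurable_const.indicator measurableSet_Ico
    · have hlt := Nat.div_lt_self (Nat.pos_of_ne_zero hn) one_lt_two
      have h1 : Measurable (fun x : ℝ => walsh (n/2) (2*x)) :=
        (ih _ hlt).comp (measurable_const_mul 2)
      have h2 : Measurable (fun x : ℝ => walsh (n/2) (2*x-1)) :=
        (ih _ hlt).comp ((measurable_const_mul 2).sub measurable_const)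
      have : walsh n = fun x => walsh (n/2) (2*x) + (if n % 2 = 0 then 1 else -1) * walsh (n/2) (2*x-1) := by
        funext x; exact walsh_pos_eq hn x
      rw [this]
      exact h1.add (measurable_const.mul h2)

lemma integrable_of_le_ind {f : ℝ → ℝ} (hm : Measurable f)
    (h : ∀ x, |f x| ≤ (Ico (0:ℝ) 1).indicator (fun _ => 1) x) : Integrable f := by
  apply Integrable.mono' (g := fun x => (Ico (0:ℝ) 1).indicator (fun _ => (1:ℝ)) x)
    ((integrable_indicator_iff measurableSet_Ico).2
      (integrableOn_const measure_Ico_lt_top.ne)) hm.aestronglyMeasurable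
  filter_upwards with x
  simpa [Real.norm_eq_abs] using h x

lemma walsh_mul_le_ind (a b : ℕ) (x : ℝ) :
    |walsh a x * walsh b x| ≤ (Ico (0:ℝ) 1).indicator (fun _ => 1) x := by
  rcases lt_or_ge x 0 with h | h
  · rw [walsh_eq_zero a x (Or.inl h)]; simp [indicator_apply]
    split <;> norm_num
  rcases lt_or_ge x 1 with h1 | h1
  · rw [indicator_of_mem (by exact ⟨h, h1⟩ : x ∈ Ico (0:ℝ) 1)]
    rw [abs_mul]
    calc |walsh a x| * |walsh b x| ≤ 1 * 1 :=
      mul_le_mul (walsh_abs_le a x) (walsh_abs_le b x) (abs_nonneg _) zero_le_one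
    _ = 1 := one_mul 1
  · rw [walsh_eq_zero a x (Or.inr h1)]; simp [indicator_apply]
    split <;> norm_num

lemma walsh_mul_integrable (a b : ℕ) : Integrable (fun x => walsh a x * walsh b x) :=
  integrable_of_le_ind ((walsh_measurable a).mul (walsh_measurable b)) (walsh_mul_le_ind a b)

lemma walsh_integrable (n : ℕ) : Integrable (walsh n) := by
  apply integrable_of_le_ind (walsh_measurable n)
  intro x
  have := walsh_mul_le_ind n 0 x
  rcases lt_or_ge x 0 with h | h
  · rw [walsh_eq_zero n x (Or.inl h)]; simp [indicator_apply]; split <;> norm_num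
  rcases lt_or_ge x 1 with h1 | h1
  · rw [indicator_of_mem (show x ∈ Ico (0:ℝ) 1 from ⟨h, h1⟩)]; exact walsh_abs_le n x
  · rw [walsh_eq_zero n x (Or.inr h1)]; simp [indicator_apply]; split <;> norm_num

lemma aux1 (m : ℕ) (x : ℝ) : |walsh m (2*x)| ≤ (Ico (0:ℝ) 1).indicator (fun _ => 1) x := by
  rcases lt_or_ge x 0 with h | h
  · rw [walsh_eq_zero m _ (Or.inl (by linarith))]; simp [indicator_apply]; split <;> norm_num
  rcases lt_or_ge x 1 with h1 | h1
  · rw [indicator_of_mem (show x ∈ Ico (0:ℝ) 1 from ⟨h, h1⟩)]; exact walsh_abs_le m _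
  · rw [walsh_eq_zero m _ (Or.inr (by linarith))]; simp [indicator_apply]; split <;> norm_num

lemma aux2 (m : ℕ) (x : ℝ) : |walsh m (2*x-1)| ≤ (Ico (0:ℝ) 1).indicator (fun _ => 1) x := by
  rcases lt_or_ge x 0 with h | h
  · rw [walsh_eq_zero m _ (Or.inl (by linarith))]; simp [indicator_apply]; split <;> norm_num
  rcases lt_or_ge x 1 with h1 | h1
  · rw [indicator_of_mem (show x ∈ Ico (0:ℝ) 1 from ⟨h, h1⟩)]; exact walsh_abs_le m _
  · rw [walsh_eq_zero m _ (Or.inr (by linarith))]; simp [indicator_apply]; split <;> norm_num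

lemma mul_abs_le_ind {f g : ℝ → ℝ} (hf : ∀ x, |f x| ≤ (Ico (0:ℝ) 1).indicator (fun _ => 1) x)
    (hg : ∀ x, |g x| ≤ 1) (x : ℝ) :
    |f x * g x| ≤ (Ico (0:ℝ) 1).indicator (fun _ => 1) x := by
  rw [abs_mul]
  calc |f x| * |g x| ≤ |f x| * 1 := mul_le_mul_of_nonneg_left (hg x) (abs_nonneg _)
  _ = |f x| := mul_one _
  _ ≤ _ := hf x

lemma int_comp1 (a b : ℕ) : Integrable (fun x => walsh a (2*x) * walsh b (2*x)) :=
  integrable_of_le_ind (((walsh_measurable a).comp (measurable_const_mul 2)).mul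
    ((walsh_measurable b).comp (measurable_const_mul 2)))
    (mul_abs_le_ind (aux1 a) (fun x => walsh_abs_le b _))

lemma int_comp2 (a b : ℕ) : Integrable (fun x => walsh a (2*x-1) * walsh b (2*x-1)) :=
  integrable_of_le_ind (((walsh_measurable a).comp ((measurable_const_mul 2).sub measurable_const)).mul
    ((walsh_measurable b).comp ((measurable_const_mul 2).sub measurable_const)))
    (mul_abs_le_ind (aux2 a) (fun x => walsh_abs_le b _))

lemma integral_comp_two_mul (f : ℝ → ℝ) : ∫ x, f (2*x) = (1/2) * ∫ x, f x := by
  rw [Measure.integral_comp_mul_left f 2]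
  norm_num

lemma integral_comp_two_mul_sub (f : ℝ → ℝ) : ∫ x, f (2*x-1) = (1/2) * ∫ x, f x := by
  have h1 : (∫ x : ℝ, f (2*x-1)) = ∫ x : ℝ, (fun y => f (2*y)) (x - 1/2) := by
    congr 1; funext x; simp only; ring_nf
  rw [h1, integral_sub_right_eq_self (fun y => f (2*y)) (1/2 : ℝ)]
  exact integral_comp_two_mul f

lemma int_comp1' (a : ℕ) : Integrable (fun x => walsh a (2*x)) :=
  (walsh_integrable a).comp_mul_left' two_ne_zero

lemma int_comp2' (a : ℕ) : Integrable (fun x => walsh a (2*x-1)) := by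
  have h : Integrable (fun y : ℝ => walsh a (y - 1)) := (walsh_integrable a).comp_sub_right 1
  exact h.comp_mul_left' two_ne_zero

lemma walsh_int_zero : ∀ b : ℕ, b ≠ 0 → (∫ x, walsh b x) = 0 := by
  intro b
  induction b using Nat.strong_induction_on with
  | _ b ih =>
    intro hb
    have hrec : ∀ x : ℝ, walsh b x =
        walsh (b/2) (2*x) + (if b % 2 = 0 then (1:ℝ) else -1) * walsh (b/2) (2*x-1) :=
      walsh_pos_eq hb
    rw [integral_congr_ae (Filter.Eventually.of_forall hrec),
      integral_add (int_comp1' _) ((int_comp2' _).const_mul _),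
      integral_const_mul,
      integral_comp_two_mul (walsh (b/2)), integral_comp_two_mul_sub (walsh (b/2))]
    rcases Nat.mod_two_eq_zero_or_one b with h | h
    · have hb2 : b / 2 ≠ 0 := by omega
      rw [ih (b/2) (by omega) hb2, h]
      norm_num
    · rw [h]; norm_num

lemma walsh_orth : ∀ (a b : ℕ), (∫ x, walsh a x * walsh b x) = if a = b then 1 else 0 := by
  have key : ∀ (m a b : ℕ), a + b ≤ m → (∫ x, walsh a x * walsh b x) = if a = b then 1 else 0 := by
    intro m
    induction m with
    | zero =>
      intro a b hab
      have ha : a = 0 := by omega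
      have hb : b = 0 := by omega
      subst ha; subst hb
      rw [if_pos rfl]
      have h0 : ∀ x : ℝ, walsh 0 x * walsh 0 x = (Ico (0:ℝ) 1).indicator (fun _ => (1:ℝ)) x := by
        intro x; rw [walsh_zero, indicator_apply]; simp only [mem_Ico]; split <;> norm_num
      rw [integral_congr_ae (Filter.Eventually.of_forall h0),
        integral_indicator_const (1:ℝ) measurableSet_Ico]
      simp [Real.volume_Ico]
    | succ m ih =>
      intro a b hab
      rcases eq_or_ne a 0 with rfl | ha
      · rcases eq_or_ne b 0 with rfl | hb
        · exact ih 0 0 (by omega)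
        · have hsingle : ∀ x : ℝ, walsh 0 x * walsh b x = walsh b x := by
            intro x
            rcases lt_or_ge x 0 with h | h
            · rw [walsh_eq_zero b x (Or.inl h)]; ring
            rcases lt_or_ge x 1 with h1 | h1
            · rw [walsh_zero, if_pos ⟨h, h1⟩, one_mul]
            · rw [walsh_eq_zero b x (Or.inr h1)]; ring
          rw [integral_congr_ae (Filter.Eventually.of_forall hsingle), if_neg (Ne.symm hb),
            walsh_int_zero b hb]
      · rcases eq_or_ne b 0 with rfl | hb
        · have hsingle : ∀ x : ℝ, walsh a x * walsh 0 x = walsh a x := by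
            intro x
            rcases lt_or_ge x 0 with h | h
            · rw [walsh_eq_zero a x (Or.inl h)]; ring
            rcases lt_or_ge x 1 with h1 | h1
            · rw [walsh_zero, if_pos ⟨h, h1⟩, mul_one]
            · rw [walsh_eq_zero a x (Or.inr h1)]; ring
          rw [integral_congr_ae (Filter.Eventually.of_forall hsingle), if_neg ha,
            walsh_int_zero a ha]
        · -- both nonzero
          set εa : ℝ := if a % 2 = 0 then 1 else -1 with hεa
          set εb : ℝ := if b % 2 = 0 then 1 else -1 with hεb
          have hpt : ∀ x : ℝ, walsh a x * walsh b x =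
              walsh (a/2) (2*x) * walsh (b/2) (2*x) +
              (εa * εb) * (walsh (a/2) (2*x-1) * walsh (b/2) (2*x-1)) := by
            intro x
            rw [walsh_pos_eq ha, walsh_pos_eq hb]
            rcases lt_or_ge x (1/2) with h | h
            · rw [walsh_eq_zero (a/2) (2*x-1) (Or.inl (by linarith)),
                walsh_eq_zero (b/2) (2*x-1) (Or.inl (by linarith))]
              ring
            · rw [walsh_eq_zero (a/2) (2*x) (Or.inr (by linarith)),
                walsh_eq_zero (b/2) (2*x) (Or.inr (by linarith))]
              ring
          have hJ : (∫ x, walsh (a/2) x * walsh (b/2) x) = if a/2 = b/2 then 1 else 0 :=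
            ih (a/2) (b/2) (by omega)
          rw [integral_congr_ae (Filter.Eventually.of_forall hpt),
            integral_add (int_comp1 _ _) ((int_comp2 _ _).const_mul _),
            integral_const_mul,
            integral_comp_two_mul (fun y => walsh (a/2) y * walsh (b/2) y),
            integral_comp_two_mul_sub (fun y => walsh (a/2) y * walsh (b/2) y),
            hJ]
          rcases Nat.mod_two_eq_zero_or_one a with hpa | hpa <;>
            rcases Nat.mod_two_eq_zero_or_one b with hpb | hpb
          · have : εa * εb = 1 := by rw [hεa, hεb, if_pos hpa, if_pos hpb]; norm_num
            rw [this]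
            have hiff : (a = b) ↔ (a/2 = b/2) := by omega
            by_cases hab2 : a/2 = b/2
            · rw [if_pos hab2, if_pos (hiff.2 hab2)]; ring
            · rw [if_neg hab2, if_neg (fun h => hab2 (hiff.1 h))]; ring
          · have h1 : εa * εb = -1 := by rw [hεa, hεb, if_pos hpa, if_neg (by omega)]; norm_num
            have hne : a ≠ b := by omega
            rw [h1, if_neg hne]; ring
          · have h1 : εa * εb = -1 := by rw [hεa, hεb, if_neg (by omega), if_pos hpb]; norm_num
            have hne : a ≠ b := by omega
            rw [h1, if_neg hne]; ring
          · have : εa * εb = 1 := by rw [hεa, hεb, if_neg (by omega), if_neg (by omega)]; norm_num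
            rw [this]
            have hiff : (a = b) ↔ (a/2 = b/2) := by omega
            by_cases hab2 : a/2 = b/2
            · rw [if_pos hab2, if_pos (hiff.2 hab2)]; ring
            · rw [if_neg hab2, if_neg (fun h => hab2 (hiff.1 h))]; ring
  intro a b; exact key (a+b) a b le_rfl

lemma two_zpow_pos (k : ℤ) : (0:ℝ) < (2:ℝ)^k := zpow_pos two_pos k

lemma wp_measurable (p : Tile) : Measurable p.wp := by
  unfold Tile.wp
  exact measurable_const.mul ((walsh_measurable p.l).comp
    ((measurable_const_mul _).sub measurable_const))

lemma wp_abs_le (p : Tile) (x : ℝ) : |p.wp x| ≤ Real.sqrt ((2:ℝ)^(-p.k)) := by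
  unfold Tile.wp
  rw [abs_mul, abs_of_nonneg (Real.sqrt_nonneg _)]
  calc Real.sqrt ((2:ℝ)^(-p.k)) * |walsh p.l _| ≤ Real.sqrt ((2:ℝ)^(-p.k)) * 1 :=
    mul_le_mul_of_nonneg_left (walsh_abs_le _ _) (Real.sqrt_nonneg _)
  _ = _ := mul_one _

lemma wp_support {p : Tile} {x : ℝ} (hx : x ∉ p.timeI) : p.wp x = 0 := by
  unfold Tile.wp
  rw [walsh_eq_zero, mul_zero]
  have h2 : (0:ℝ) < (2:ℝ)^(-p.k) := two_zpow_pos _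
  have hinv : (2:ℝ)^(-p.k) * (2:ℝ)^p.k = 1 := by
    rw [← zpow_add₀ (two_ne_zero' ℝ)]; norm_num
  simp only [Tile.timeI, mem_Ico, not_and_or, not_le, not_lt] at hx
  rcases hx with h | h
  · left; nlinarith
  · right; nlinarith

lemma wp_mul_eq (k : ℤ) (n l l' : ℕ) (x : ℝ) :
    Tile.wp ⟨k,n,l⟩ x * Tile.wp ⟨k,n,l'⟩ x =
      (2:ℝ)^(-k) * ((fun y => walsh l y * walsh l' y) ((2:ℝ)^(-k) * x - n)) := by
  have hs : Real.sqrt ((2:ℝ)^(-k)) * Real.sqrt ((2:ℝ)^(-k)) = (2:ℝ)^(-k) :=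
    Real.mul_self_sqrt (two_zpow_pos _).le
  simp only [Tile.wp]
  calc Real.sqrt ((2:ℝ)^(-k)) * walsh l ((2:ℝ)^(-k) * x - n) *
      (Real.sqrt ((2:ℝ)^(-k)) * walsh l' ((2:ℝ)^(-k) * x - n))
      = (Real.sqrt ((2:ℝ)^(-k)) * Real.sqrt ((2:ℝ)^(-k))) *
        (walsh l ((2:ℝ)^(-k) * x - n) * walsh l' ((2:ℝ)^(-k) * x - n)) := by ring
  _ = _ := by rw [hs]

lemma wp_mul_integrable (k : ℤ) (n l l' : ℕ) :
    Integrable (fun x => Tile.wp ⟨k,n,l⟩ x * Tile.wp ⟨k,n,l'⟩ x) := by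
  have h1 : Integrable (fun y : ℝ => walsh l (y - n) * walsh l' (y - n)) :=
    (walsh_mul_integrable l l').comp_sub_right (n:ℝ)
  have h2 : Integrable (fun x : ℝ => walsh l ((2:ℝ)^(-k) * x - n) * walsh l' ((2:ℝ)^(-k) * x - n)) :=
    h1.comp_mul_left' (ne_of_gt (two_zpow_pos _))
  have := h2.const_mul ((2:ℝ)^(-k))
  apply this.congr
  filter_upwards with x
  rw [wp_mul_eq]

lemma wp_orth (k : ℤ) (n l l' : ℕ) :
    (∫ x, Tile.wp ⟨k,n,l⟩ x * Tile.wp ⟨k,n,l'⟩ x) = if l = l' then 1 else 0 := by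
  have h2k : (0:ℝ) < (2:ℝ)^(-k) := two_zpow_pos _
  calc (∫ x, Tile.wp ⟨k,n,l⟩ x * Tile.wp ⟨k,n,l'⟩ x)
      = ∫ x, (2:ℝ)^(-k) * ((fun y => walsh l y * walsh l' y) ((2:ℝ)^(-k) * x - n)) := by
        apply integral_congr_ae; filter_upwards with x; rw [wp_mul_eq]
  _ = (2:ℝ)^(-k) * ∫ x, (fun y => walsh l (y - n) * walsh l' (y - n)) ((2:ℝ)^(-k) * x) := by
        rw [integral_const_mul]
  _ = (2:ℝ)^(-k) * (|((2:ℝ)^(-k))⁻¹| • ∫ y, walsh l (y - n) * walsh l' (y - n)) := by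
        rw [Measure.integral_comp_mul_left (fun y => walsh l (y - n) * walsh l' (y - n)) ((2:ℝ)^(-k))]
  _ = (2:ℝ)^(-k) * ((2:ℝ)^k * ∫ y, walsh l y * walsh l' y) := by
        rw [integral_sub_right_eq_self (fun y => walsh l y * walsh l' y) (n:ℝ)]
        rw [smul_eq_mul]
        congr 1
        rw [abs_of_pos (inv_pos.2 h2k), ← zpow_neg, neg_neg]
  _ = if l = l' then 1 else 0 := by
        rw [walsh_orth l l', ← mul_assoc, ← zpow_add₀ (two_ne_zero' ℝ)]
        norm_num

instance : DecidableEq Tile := fun p q =>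
  decidable_of_iff (p.k = q.k ∧ p.n = q.n ∧ p.l = q.l) (by cases p; cases q; simp)

lemma timeI_eq {p : Tile} {k : ℤ} {n : ℕ} (h : p.timeI = dyadicI k n) : p.k = k ∧ p.n = n := by
  unfold Tile.timeI dyadicI at h
  have hne : ((2:ℝ)^k * n) < ((2:ℝ)^k * (n+1)) := by
    have := two_zpow_pos k
    nlinarith [Nat.cast_nonneg (α := ℝ) n]
  rw [Set.Ico_eq_Ico_iff (Or.inr hne)] at h
  obtain ⟨h1, h2⟩ := h
  have hk : (2:ℝ)^p.k = (2:ℝ)^k := by nlinarith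
  have hkk : p.k = k := by
    exact zpow_right_injective₀ (by norm_num) (by norm_num : (2:ℝ) ≠ 1) hk
  refine ⟨hkk, ?_⟩
  rw [hk] at h1
  have : (p.n : ℝ) = n := mul_left_cancel₀ (ne_of_gt (two_zpow_pos k)) h1
  exact_mod_cast this

lemma sum_sq_integral {𝔭 : Finset Tile} {k : ℤ} {n : ℕ}
    (hkn : ∀ p ∈ 𝔭, p.k = k ∧ p.n = n) (r : Tile → ℝ) :
    ∫ x, (∑ p ∈ 𝔭, r p * p.wp x)^2 = ∑ p ∈ 𝔭, (r p)^2 := by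
  have horth : ∀ p ∈ 𝔭, ∀ q ∈ 𝔭, (∫ x, p.wp x * q.wp x) = if p = q then 1 else 0 := by
    intro p hp q hq
    obtain ⟨hpk, hpn⟩ := hkn p hp
    obtain ⟨hqk, hqn⟩ := hkn q hq
    obtain ⟨pk, pn, pl⟩ := p
    obtain ⟨qk, qn, ql⟩ := q
    simp only at hpk hpn hqk hqn
    rw [hpk, hpn, hqk, hqn, wp_orth k n pl ql]
    simp [Tile.mk.injEq]
  have hint : ∀ p ∈ 𝔭, ∀ q ∈ 𝔭, Integrable (fun x => p.wp x * q.wp x) := by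
    intro p hp q hq
    obtain ⟨hpk, hpn⟩ := hkn p hp
    obtain ⟨hqk, hqn⟩ := hkn q hq
    obtain ⟨pk, pn, pl⟩ := p
    obtain ⟨qk, qn, ql⟩ := q
    simp only at hpk hpn hqk hqn
    rw [hpk, hpn, hqk, hqn]
    exact wp_mul_integrable k n pl ql
  have hexp : ∀ x : ℝ, (∑ p ∈ 𝔭, r p * p.wp x)^2 =
      ∑ p ∈ 𝔭, ∑ q ∈ 𝔭, (r p * r q) * (p.wp x * q.wp x) := by
    intro x
    rw [sq, Finset.sum_mul_sum]
    exact Finset.sum_congr rfl fun p _ => Finset.sum_congr rfl fun q _ => by ring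
  rw [integral_congr_ae (Filter.Eventually.of_forall hexp)]
  rw [integral_finset_sum _ (fun p hp => integrable_finset_sum _
    (fun q hq => ((hint p hp q hq).const_mul _)))]
  have : ∀ p ∈ 𝔭, (∫ x, ∑ q ∈ 𝔭, (r p * r q) * (p.wp x * q.wp x)) = (r p)^2 := by
    intro p hp
    rw [integral_finset_sum _ (fun q hq => (hint p hp q hq).const_mul _)]
    have h1 : ∀ q ∈ 𝔭, (∫ x, (r p * r q) * (p.wp x * q.wp x)) =
        if p = q then r p * r q else 0 := by
      intro q hq
      rw [integral_const_mul, horth p hp q hq]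
      split <;> simp
    rw [Finset.sum_congr rfl h1, Finset.sum_ite_eq 𝔭 p (fun q => r p * r q), if_pos hp, sq]
  rw [Finset.sum_congr rfl this]

lemma integrable_sq_sum {𝔭 : Finset Tile} {k : ℤ} {n : ℕ}
    (hkn : ∀ p ∈ 𝔭, p.k = k ∧ p.n = n) (r : Tile → ℝ) :
    Integrable (fun x => (∑ p ∈ 𝔭, r p * p.wp x)^2) := by
  have hint : ∀ p ∈ 𝔭, ∀ q ∈ 𝔭, Integrable (fun x => p.wp x * q.wp x) := by
    intro p hp q hq
    obtain ⟨hpk, hpn⟩ := hkn p hp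
    obtain ⟨hqk, hqn⟩ := hkn q hq
    obtain ⟨pk, pn, pl⟩ := p
    obtain ⟨qk, qn, ql⟩ := q
    simp only at hpk hpn hqk hqn
    rw [hpk, hpn, hqk, hqn]
    exact wp_mul_integrable k n pl ql
  have hexp : ∀ x : ℝ, (∑ p ∈ 𝔭, r p * p.wp x)^2 =
      ∑ p ∈ 𝔭, ∑ q ∈ 𝔭, (r p * r q) * (p.wp x * q.wp x) := by
    intro x
    rw [sq, Finset.sum_mul_sum]
    exact Finset.sum_congr rfl fun p _ => Finset.sum_congr rfl fun q _ => by ring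
  apply Integrable.congr (f := fun x => ∑ p ∈ 𝔭, ∑ q ∈ 𝔭, (r p * r q) * (p.wp x * q.wp x))
  · exact integrable_finset_sum _ (fun p hp => integrable_finset_sum _
      (fun q hq => ((hint p hp q hq).const_mul _)))
  · filter_upwards with x; rw [hexp]

lemma L2_sum {𝔭 : Finset Tile} {k : ℤ} {n : ℕ}
    (hkn : ∀ p ∈ 𝔭, p.k = k ∧ p.n = n) (c : Tile → ℂ) :
    ∫ x, ‖∑ p ∈ 𝔭, c p * (p.wp x : ℂ)‖^2 = ∑ p ∈ 𝔭, ‖c p‖^2 := by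
  have hnorm : ∀ x : ℝ, ‖∑ p ∈ 𝔭, c p * (p.wp x : ℂ)‖^2 =
      (∑ p ∈ 𝔭, (c p).re * p.wp x)^2 + (∑ p ∈ 𝔭, (c p).im * p.wp x)^2 := by
    intro x
    rw [Complex.sq_norm, Complex.normSq_apply, Complex.re_sum, Complex.im_sum]
    have h1 : ∀ p ∈ 𝔭, (c p * (p.wp x : ℂ)).re = (c p).re * p.wp x := fun p _ => by
      simp [Complex.mul_re]
    have h2 : ∀ p ∈ 𝔭, (c p * (p.wp x : ℂ)).im = (c p).im * p.wp x := fun p _ => by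
      simp [Complex.mul_im]
    rw [Finset.sum_congr rfl h1, Finset.sum_congr rfl h2]
    ring
  rw [integral_congr_ae (Filter.Eventually.of_forall hnorm),
    integral_add (integrable_sq_sum hkn _) (integrable_sq_sum hkn _),
    sum_sq_integral hkn, sum_sq_integral hkn, ← Finset.sum_add_distrib]
  exact Finset.sum_congr rfl fun p _ => by
    rw [Complex.sq_norm, Complex.normSq_apply]
    ring

lemma integrable_norm_sq_sum {𝔭 : Finset Tile} {k : ℤ} {n : ℕ}
    (hkn : ∀ p ∈ 𝔭, p.k = k ∧ p.n = n) (c : Tile → ℂ) :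
    Integrable (fun x => ‖∑ p ∈ 𝔭, c p * (p.wp x : ℂ)‖^2) := by
  have hnorm : ∀ x : ℝ, ‖∑ p ∈ 𝔭, c p * (p.wp x : ℂ)‖^2 =
      (∑ p ∈ 𝔭, (c p).re * p.wp x)^2 + (∑ p ∈ 𝔭, (c p).im * p.wp x)^2 := by
    intro x
    rw [Complex.sq_norm, Complex.normSq_apply, Complex.re_sum, Complex.im_sum]
    have h1 : ∀ p ∈ 𝔭, (c p * (p.wp x : ℂ)).re = (c p).re * p.wp x := fun p _ => by
      simp [Complex.mul_re]
    have h2 : ∀ p ∈ 𝔭, (c p * (p.wp x : ℂ)).im = (c p).im * p.wp x := fun p _ => by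
      simp [Complex.mul_im]
    rw [Finset.sum_congr rfl h1, Finset.sum_congr rfl h2]
    ring
  apply Integrable.congr ((integrable_sq_sum hkn (fun p => (c p).re)).add
    (integrable_sq_sum hkn (fun p => (c p).im)))
  filter_upwards with x
  simp only [Pi.add_apply]
  rw [hnorm]

end CZAux

/-- The multi-frequency Calderón-Zygmund estimate: for at most `N` pairwise disjoint
tiles with common time interval `I`, the projection `a` of `g` onto the span of the
corresponding wave packets satisfies
`‖a‖₂² = Σ_p |⟨g, w_p⟩|² ≤ N^{1-2ε} ‖g 1_I‖_{1/(1-ε)}² |I|^{2ε-1}`. -/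
theorem multi_frequency_CZ :
    ∀ ε : ℝ, 0 < ε → ε < 1/2 →
    ∀ (k : ℤ) (n : ℕ) (𝔭 : Finset Tile) (N : ℕ), 𝔭.card ≤ N →
      (∀ p ∈ 𝔭, p.timeI = dyadicI k n) →
      (↑𝔭 : Set Tile).PairwiseDisjoint Tile.toSet →
      ∀ g : ℝ → ℂ, MemLp g (ENNReal.ofReal (1/(1-ε))) volume → (∀ x < (0:ℝ), g x = 0) →
        eLpNorm (fun x => ∑ p ∈ 𝔭, projT p g x) 2 volume ^ 2 =
          ∑ p ∈ 𝔭, (‖coef g p‖₊ : ℝ≥0∞) ^ 2 ∧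
        ∑ p ∈ 𝔭, (‖coef g p‖₊ : ℝ≥0∞) ^ 2 ≤
          (N : ℝ≥0∞) ^ ((1:ℝ) - 2*ε) *
            eLpNorm ((dyadicI k n).indicator g) (ENNReal.ofReal (1/(1-ε))) volume ^ 2 *
            volume (dyadicI k n) ^ (2*ε - 1) := by
  intro ε hε hε2 k n 𝔭 N hcard htime _hdisj g hg _hg0
  have hkn : ∀ p ∈ 𝔭, p.k = k ∧ p.n = n := fun p hp => timeI_eq (htime p hp)
  have hImeas : MeasurableSet (dyadicI k n) := measurableSet_Ico
  set c : Tile → ℂ := coef g with hc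
  set a : ℝ → ℂ := fun x => ∑ p ∈ 𝔭, projT p g x with ha
  have haeq : ∀ x, a x = ∑ p ∈ 𝔭, c p * ((p.wp x : ℝ) : ℂ) := fun x => rfl
  set A2 : ℝ := ∑ p ∈ 𝔭, ‖c p‖^2 with hA2def
  have hA2nonneg : (0:ℝ) ≤ A2 := Finset.sum_nonneg fun p _ => sq_nonneg _
  have hreal : (∫ x, ‖a x‖^2) = A2 := L2_sum hkn c
  have hintsq : Integrable (fun x => ‖a x‖^2) := integrable_norm_sq_sum hkn c
  have hL2 : (∫⁻ x, ((‖a x‖₊ : ℝ≥0∞)) ^ (2:ℝ)) = ENNReal.ofReal A2 := by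
    rw [← hreal, MeasureTheory.ofReal_integral_eq_lintegral_ofReal hintsq
      (Filter.Eventually.of_forall fun x => sq_nonneg _)]
    apply lintegral_congr
    intro x
    rw [← ofReal_norm_eq_coe_nnnorm,
      ENNReal.ofReal_rpow_of_nonneg (norm_nonneg _) (by norm_num : (0:ℝ) ≤ 2)]
    congr 1
    rw [show ((2:ℝ)) = ((2:ℕ):ℝ) by norm_num, Real.rpow_natCast]
  have hsum : (∑ p ∈ 𝔭, ((‖coef g p‖₊ : ℝ≥0∞))^2) = ENNReal.ofReal A2 := by
    rw [hA2def, ENNReal.ofReal_sum_of_nonneg (fun p _ => sq_nonneg _)]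
    exact Finset.sum_congr rfl fun p _ => by
      rw [ENNReal.ofReal_pow (norm_nonneg _), ofReal_norm_eq_coe_nnnorm]
  have hpart1 : eLpNorm a 2 volume ^ 2 = ∑ p ∈ 𝔭, ((‖coef g p‖₊ : ℝ≥0∞))^2 := by
    rw [hsum, ← hL2, eLpNorm_eq_lintegral_rpow_enorm_toReal two_ne_zero ENNReal.ofNat_ne_top]
    have ht : (2:ℝ≥0∞).toReal = (2:ℝ) := by simp
    rw [ht, ← ENNReal.rpow_natCast _ 2, ← ENNReal.rpow_mul]
    norm_num
    rfl
  refine ⟨hpart1, ?_⟩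
  rw [hsum]
  by_cases hA0 : A2 = 0
  · rw [hA0, ENNReal.ofReal_zero]; exact zero_le
  have hA2pos : 0 < A2 := lt_of_le_of_ne hA2nonneg (Ne.symm hA0)
  have hε1 : (0:ℝ) < 1 - ε := by linarith
  set q : ℝ := 1/(1-ε) with hq
  have hq0 : 0 < q := by positivity
  have hq1 : 1 ≤ q := by rw [hq, le_div_iff₀ hε1]; linarith
  set q' : ℝ := 1/ε with hq'
  have hq'0 : 0 < q' := by positivity
  have hq'2 : 2 ≤ q' := by rw [hq', le_div_iff₀ hε]; linarith
  have hconj : Real.HolderConjugate q q' := by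
    constructor
    · rw [hq, hq', one_div, one_div, inv_inv, inv_inv, inv_one]; ring
    · exact hq0
    · exact hq'0
  have hvol : volume (dyadicI k n) = ENNReal.ofReal ((2:ℝ)^k) := by
    unfold dyadicI
    rw [Real.volume_Ico]
    congr 1; ring
  haveI hfin : IsFiniteMeasure (volume.restrict (dyadicI k n)) := by
    constructor
    rw [Measure.restrict_apply_univ, hvol]
    exact ENNReal.ofReal_lt_top
  have hIg : Integrable g (volume.restrict (dyadicI k n)) :=
    (hg.restrict _).integrable (ENNReal.one_le_ofReal.2 hq1)
  have hind : Integrable ((dyadicI k n).indicator g) :=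
    (integrable_indicator_iff hImeas).2 hIg
  have hwp0 : ∀ p ∈ 𝔭, ∀ x, x ∉ dyadicI k n → p.wp x = 0 := by
    intro p hp x hx
    apply wp_support
    rw [htime p hp]; exact hx
  have ha0 : ∀ x, x ∉ dyadicI k n → a x = 0 := by
    intro x hx
    rw [haeq]
    exact Finset.sum_eq_zero fun p hp => by rw [hwp0 p hp x hx, Complex.ofReal_zero, mul_zero]
  have hgw : ∀ p ∈ 𝔭, Integrable (fun x => (starRingEnd ℂ) (g x) * (c p * ((p.wp x : ℝ) : ℂ))) := by
    intro p hp
    have hb : Integrable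
        (fun x => (‖c p‖ * Real.sqrt ((2:ℝ)^(-k))) * ‖(dyadicI k n).indicator g x‖) :=
      hind.norm.const_mul _
    apply Integrable.mono' hb
    · simp_rw [starRingEnd_apply]
      exact (continuous_star.comp_aestronglyMeasurable hg.aestronglyMeasurable).mul
        (((Complex.measurable_ofReal.comp (wp_measurable p)).const_mul (c p)).aestronglyMeasurable)
    · filter_upwards with x
      by_cases hx : x ∈ dyadicI k n
      · rw [norm_mul, norm_mul, indicator_of_mem hx, RCLike.norm_conj]
        have h1 : ‖((p.wp x : ℝ) : ℂ)‖ ≤ Real.sqrt ((2:ℝ)^(-k)) := by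
          rw [Complex.norm_real, Real.norm_eq_abs]
          have h2 := wp_abs_le p x
          rwa [(hkn p hp).1] at h2
        nlinarith [mul_le_mul_of_nonneg_left h1
          (mul_nonneg (norm_nonneg (g x)) (norm_nonneg (c p))),
          norm_nonneg (g x), norm_nonneg (c p)]
      · rw [hwp0 p hp x hx]
        simp only [Complex.ofReal_zero, mul_zero, norm_zero, indicator_of_notMem hx]
        positivity
  have hcoef : ∀ p ∈ 𝔭,
      (∫ x, (starRingEnd ℂ) (g x) * (c p * ((p.wp x : ℝ) : ℂ)))
        = c p * (starRingEnd ℂ) (c p) := by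
    intro p hp
    have h1 : ∀ x, (starRingEnd ℂ) (g x) * (c p * ((p.wp x : ℝ) : ℂ)) =
        c p * (starRingEnd ℂ) (g x * ((p.wp x : ℝ) : ℂ)) := by
      intro x
      rw [map_mul, Complex.conj_ofReal]
      ring
    rw [integral_congr_ae (Filter.Eventually.of_forall h1), integral_const_mul, integral_conj]
    rfl
  have hga : Integrable (fun x => (starRingEnd ℂ) (g x) * a x) := by
    apply Integrable.congr (integrable_finset_sum 𝔭 hgw)
    filter_upwards with x
    rw [haeq, Finset.mul_sum]
  have hdual : A2 = (∫ x, (starRingEnd ℂ) (g x) * a x).re := by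
    have hsplit : (∫ x, (starRingEnd ℂ) (g x) * a x)
        = ∑ p ∈ 𝔭, ∫ x, (starRingEnd ℂ) (g x) * (c p * ((p.wp x : ℝ) : ℂ)) := by
      rw [← integral_finset_sum _ hgw]
      apply integral_congr_ae; filter_upwards with x
      rw [haeq, Finset.mul_sum]
    rw [hsplit, Finset.sum_congr rfl hcoef, Complex.re_sum, hA2def]
    exact Finset.sum_congr rfl fun p _ => by
      rw [Complex.mul_conj]
      simp [← Complex.sq_norm, ← Complex.ofReal_pow]
  have hnormed : ∀ x, ‖(starRingEnd ℂ) (g x) * a x‖ =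
      ‖(dyadicI k n).indicator g x‖ * ‖a x‖ := by
    intro x
    by_cases hx : x ∈ dyadicI k n
    · rw [norm_mul, indicator_of_mem hx, RCLike.norm_conj]
    · rw [ha0 x hx, indicator_of_notMem hx]; simp
  have hup : ENNReal.ofReal A2 ≤
      ∫⁻ x, (‖(dyadicI k n).indicator g x‖₊ : ℝ≥0∞) * (‖a x‖₊ : ℝ≥0∞) := by
    have h1 : A2 ≤ ∫ x, ‖(dyadicI k n).indicator g x‖ * ‖a x‖ := by
      rw [hdual]
      have h2 : (∫ x, (starRingEnd ℂ) (g x) * a x).re ≤ ‖∫ x, (starRingEnd ℂ) (g x) * a x‖ := by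
        exact Complex.re_le_norm _
      apply h2.trans
      apply (norm_integral_le_integral_norm _).trans
      apply le_of_eq
      exact integral_congr_ae (Filter.Eventually.of_forall hnormed)
    calc ENNReal.ofReal A2 ≤ ENNReal.ofReal (∫ x, ‖(dyadicI k n).indicator g x‖ * ‖a x‖) :=
      ENNReal.ofReal_le_ofReal h1
    _ = ∫⁻ x, ENNReal.ofReal (‖(dyadicI k n).indicator g x‖ * ‖a x‖) := by
      apply MeasureTheory.ofReal_integral_eq_lintegral_ofReal
      · apply Integrable.congr hga.norm
        filter_upwards with x
        exact hnormed x
      · filter_upwards with x; positivity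
    _ = _ := by
      apply lintegral_congr; intro x
      rw [ENNReal.ofReal_mul (norm_nonneg _), ofReal_norm_eq_coe_nnnorm,
        ofReal_norm_eq_coe_nnnorm]
  have hmeasa : Measurable a := by
    have : Measurable (fun x => ∑ p ∈ 𝔭, c p * ((p.wp x : ℝ) : ℂ)) :=
      Finset.measurable_sum 𝔭 fun p _ =>
        (Complex.measurable_ofReal.comp (wp_measurable p)).const_mul (c p)
    exact this
  have hholder := ENNReal.lintegral_mul_le_Lp_mul_Lq volume hconj
    ((hg.aestronglyMeasurable.indicator hImeas).enorm)
    (hmeasa.aestronglyMeasurable.enorm)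
  have hH : ENNReal.ofReal A2 ≤
      (∫⁻ x, (‖(dyadicI k n).indicator g x‖₊ : ℝ≥0∞) ^ q) ^ (1/q) *
      (∫⁻ x, (‖a x‖₊ : ℝ≥0∞) ^ q') ^ (1/q') := hup.trans (by exact hholder)
  set B : ℝ := Real.sqrt ((N:ℝ) * (2:ℝ)^(-k) * A2) with hB
  have hBnn : 0 ≤ (N:ℝ) * (2:ℝ)^(-k) * A2 := by positivity
  have haB : ∀ x, (‖a x‖₊ : ℝ≥0∞) ≤ ENNReal.ofReal B := by
    intro x
    rw [← ofReal_norm_eq_coe_nnnorm]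
    apply ENNReal.ofReal_le_ofReal
    rw [hB]
    apply (Real.le_sqrt (norm_nonneg _) hBnn).2
    have h1 : ‖a x‖ ≤ Real.sqrt ((2:ℝ)^(-k)) * ∑ p ∈ 𝔭, ‖c p‖ := by
      rw [haeq]
      apply (norm_sum_le _ _).trans
      rw [Finset.mul_sum]
      apply Finset.sum_le_sum
      intro p hp
      rw [norm_mul, Complex.norm_real, Real.norm_eq_abs]
      have h2 := wp_abs_le p x
      rw [(hkn p hp).1] at h2
      calc ‖c p‖ * |p.wp x| ≤ ‖c p‖ * Real.sqrt ((2:ℝ)^(-k)) :=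
        mul_le_mul_of_nonneg_left h2 (norm_nonneg _)
      _ = _ := mul_comm _ _
    have h2 : (∑ p ∈ 𝔭, ‖c p‖)^2 ≤ (𝔭.card : ℝ) * A2 := by
      have h3 := sq_sum_le_card_mul_sum_sq (s := 𝔭) (f := fun p => ‖c p‖)
      rw [hA2def]
      exact_mod_cast h3
    have hsq : Real.sqrt ((2:ℝ)^(-k))^2 = (2:ℝ)^(-k) := Real.sq_sqrt (two_zpow_pos _).le
    have hcard' : (𝔭.card : ℝ) ≤ (N:ℝ) := by exact_mod_cast hcard
    calc ‖a x‖^2 ≤ (Real.sqrt ((2:ℝ)^(-k)) * ∑ p ∈ 𝔭, ‖c p‖)^2 := by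
          apply pow_le_pow_left₀ (norm_nonneg _) h1
    _ = (2:ℝ)^(-k) * (∑ p ∈ 𝔭, ‖c p‖)^2 := by rw [mul_pow, hsq]
    _ ≤ (2:ℝ)^(-k) * ((𝔭.card:ℝ) * A2) := mul_le_mul_of_nonneg_left h2 (two_zpow_pos _).le
    _ ≤ (N:ℝ) * (2:ℝ)^(-k) * A2 := by
        nlinarith [mul_le_mul_of_nonneg_right
          (mul_le_mul_of_nonneg_left hcard' (two_zpow_pos (-k)).le) hA2nonneg]
  have h2f : (∫⁻ x, (‖a x‖₊ : ℝ≥0∞) ^ q') ≤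
      ENNReal.ofReal B ^ (q' - 2) * ENNReal.ofReal A2 := by
    have hpt : ∀ x, (‖a x‖₊ : ℝ≥0∞) ^ q' ≤
        ENNReal.ofReal B ^ (q'-2) * (‖a x‖₊ : ℝ≥0∞) ^ (2:ℝ) := by
      intro x
      have heq : (‖a x‖₊ : ℝ≥0∞) ^ q' =
          (‖a x‖₊ : ℝ≥0∞) ^ (q'-2) * (‖a x‖₊ : ℝ≥0∞) ^ (2:ℝ) := by
        rw [← ENNReal.rpow_add_of_nonneg _ _ (by linarith) (by norm_num)]
        norm_num
      rw [heq]
      exact mul_le_mul_left (ENNReal.rpow_le_rpow (haB x) (by linarith)) _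
    calc (∫⁻ x, (‖a x‖₊ : ℝ≥0∞) ^ q')
        ≤ ∫⁻ x, ENNReal.ofReal B ^ (q'-2) * (‖a x‖₊ : ℝ≥0∞) ^ (2:ℝ) := lintegral_mono hpt
    _ = ENNReal.ofReal B ^ (q'-2) * ∫⁻ x, (‖a x‖₊ : ℝ≥0∞) ^ (2:ℝ) :=
      lintegral_const_mul' _ _
        (ENNReal.rpow_ne_top_of_nonneg (by linarith) ENNReal.ofReal_ne_top)
    _ = _ := by rw [hL2]
  have hfac2 : (∫⁻ x, (‖a x‖₊ : ℝ≥0∞) ^ q') ^ (1/q') ≤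
      ENNReal.ofReal B ^ ((q'-2)/q') * ENNReal.ofReal A2 ^ (1/q') := by
    calc (∫⁻ x, (‖a x‖₊ : ℝ≥0∞) ^ q') ^ (1/q')
        ≤ (ENNReal.ofReal B ^ (q'-2) * ENNReal.ofReal A2) ^ (1/q') :=
      ENNReal.rpow_le_rpow h2f (by positivity)
    _ = _ := by
      rw [ENNReal.mul_rpow_of_nonneg _ _ (by positivity), ← ENNReal.rpow_mul]
      congr 2
      field_simp
  have he1 : (q' - 2)/q' = 1 - 2*ε := by
    rw [hq']
    field_simp
  have he2 : 1/q' = ε := by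
    rw [hq']
    field_simp
  set G := eLpNorm ((dyadicI k n).indicator g) (ENNReal.ofReal q) volume with hGdef
  have hGfact : (∫⁻ x, (‖(dyadicI k n).indicator g x‖₊ : ℝ≥0∞) ^ q) ^ (1/q) = G := by
    rw [hGdef, eLpNorm_eq_lintegral_rpow_enorm_toReal
      (by rw [Ne, ENNReal.ofReal_eq_zero]; linarith) ENNReal.ofReal_ne_top,
      ENNReal.toReal_ofReal hq0.le]
    rfl
  -- main chain
  set X := ENNReal.ofReal A2 with hXdef
  set C := ENNReal.ofReal ((N:ℝ) * (2:ℝ)^(-k)) ^ ((1 - 2*ε)/2) with hCdef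
  have hBr : ENNReal.ofReal B ^ (1 - 2*ε) = C * X ^ ((1 - 2*ε)/2) := by
    rw [hB, Real.sqrt_eq_rpow, ← ENNReal.ofReal_rpow_of_nonneg hBnn (by norm_num),
      ← ENNReal.rpow_mul, ENNReal.ofReal_mul (by positivity),
      ENNReal.mul_rpow_of_nonneg _ _ (by nlinarith : (0:ℝ) ≤ 1/2 * (1 - 2*ε)), hCdef, hXdef]
    congr 2 <;> ring
  have hchain : X ≤ (G * C) * X ^ ((1:ℝ)/2) := by
    calc X ≤ (∫⁻ x, (‖(dyadicI k n).indicator g x‖₊ : ℝ≥0∞) ^ q) ^ (1/q) *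
        (∫⁻ x, (‖a x‖₊ : ℝ≥0∞) ^ q') ^ (1/q') := hH
    _ ≤ G * (ENNReal.ofReal B ^ ((q'-2)/q') * X ^ (1/q')) := by
        rw [hGfact]
        exact mul_le_mul_right hfac2 _
    _ = G * (C * X ^ ((1 - 2*ε)/2) * X ^ ε) := by rw [he1, he2, hBr]
    _ = (G * C) * (X ^ ((1 - 2*ε)/2) * X ^ ε) := by ring
    _ = (G * C) * X ^ ((1:ℝ)/2) := by
        rw [← ENNReal.rpow_add_of_nonneg _ _ (by nlinarith) hε.le]
        congr 1
        ring
  have hX0 : X ≠ 0 := by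
    rw [hXdef, Ne, ENNReal.ofReal_eq_zero]
    linarith
  have hXtop : X ≠ ⊤ := ENNReal.ofReal_ne_top
  have hXh0 : X ^ ((1:ℝ)/2) ≠ 0 := by
    simp [ENNReal.rpow_eq_zero_iff, hX0, hXtop]
  have hXhtop : X ^ ((1:ℝ)/2) ≠ ⊤ := ENNReal.rpow_ne_top_of_nonneg (by norm_num) hXtop
  have hhalf : X ^ ((1:ℝ)/2) ≤ G * C := by
    rw [← ENNReal.mul_le_mul_iff_left hXh0 hXhtop]
    calc X ^ ((1:ℝ)/2) * X ^ ((1:ℝ)/2) = X := by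
          rw [← ENNReal.rpow_add_of_nonneg _ _ (by norm_num) (by norm_num)]
          norm_num
    _ ≤ (G * C) * X ^ ((1:ℝ)/2) := hchain
  have hfin : X ≤ (G * C) ^ (2:ℝ) := by
    calc X = (X ^ ((1:ℝ)/2)) ^ (2:ℝ) := by
          rw [← ENNReal.rpow_mul]
          norm_num
    _ ≤ (G * C) ^ (2:ℝ) := ENNReal.rpow_le_rpow hhalf (by norm_num)
  -- final algebra
  have hC2 : C ^ (2:ℝ) = (N : ℝ≥0∞) ^ ((1:ℝ) - 2*ε) * volume (dyadicI k n) ^ (2*ε - 1) := by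
    rw [hCdef, ← ENNReal.rpow_mul]
    have hexp : (1 - 2*ε)/2 * 2 = 1 - 2*ε := by ring
    rw [hexp, ENNReal.ofReal_mul (by positivity), ENNReal.ofReal_natCast,
      ENNReal.mul_rpow_of_nonneg _ _ (by linarith)]
    congr 1
    rw [hvol, zpow_neg, ENNReal.ofReal_inv_of_pos (two_zpow_pos k), ENNReal.inv_rpow,
      ← ENNReal.rpow_neg]
    congr 1
    ring
  have hfinal : (G * C) ^ (2:ℝ) =
      (N : ℝ≥0∞) ^ ((1:ℝ) - 2*ε) * G ^ 2 * volume (dyadicI k n) ^ (2*ε - 1) := by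
    rw [ENNReal.mul_rpow_of_nonneg _ _ (by norm_num : (0:ℝ) ≤ 2), hC2,
      show ((2:ℝ)) = ((2:ℕ):ℝ) by norm_num, ENNReal.rpow_natCast]
    ring
  rw [← hfinal]
  exact hfin

end Quartile
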